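/- Let n ≥ 2 and let n_1,...,n_b be divisors of n with n_j ≥ 2. There exists a surjective group homomorphism Φ from the free product Z_{n_1} * Z_{n_2} * ... * Z_{n_b} onto Z_n whose kernel is torsion-free if and only if gcd(n/n_1, ..., n/n_b) = 1. -/

import Mathlib

open Monoid

namespace TorsionAux

variable {ι : Type*} {G : ι → Type*} [∀ i, Group (G i)]

theorem neword_prod_ne_one {i j : ι} (w : CoprodI.NeWord G i j) : w.prod ≠ 1 := by
  intro h
  have h2 : w.toWord.prod = CoprodI.Word.prod CoprodI.Word.empty := by
    simpa [CoprodI.NeWord.prod] using h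
  classical
  have h3 : w.toWord = CoprodI.Word.empty :=
    (CoprodI.Word.equiv (M := G)).symm.injective h2
  have := w.toList_ne_nil
  rw [show w.toList = w.toWord.toList from rfl, h3] at this
  exact this rfl

theorem neword_pow_ne_one {i j : ι} (hij : i ≠ j) (w : CoprodI.NeWord G i j) (k : ℕ) :
    w.prod ^ (k + 1) ≠ 1 := by
  have h : ∀ k : ℕ, ∃ u : CoprodI.NeWord G i j, u.prod = w.prod ^ (k + 1) := by
    intro k
    induction k with
    | zero => exact ⟨w, (pow_one _).symm⟩
    | succ m ih =>
      obtain ⟨u, hu⟩ := ih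
      exact ⟨CoprodI.NeWord.append w hij.symm u, by
        rw [CoprodI.NeWord.append_prod, hu]; exact (pow_succ' _ _).symm⟩
  obtain ⟨u, hu⟩ := h k
  rw [← hu]
  exact neword_prod_ne_one u

theorem neword_inv_length {i j : ι} (w : CoprodI.NeWord G i j) :
    w.inv.toList.length = w.toList.length := by
  induction w <;> simp [CoprodI.NeWord.inv, *] <;> omega

variable [DecidableEq ι] [∀ i, DecidableEq (G i)]

omit [DecidableEq ι] in
theorem rcons_length {i : ι} (p : CoprodI.Word.Pair G i) :
    (CoprodI.Word.rcons p).toList.length ≤ p.tail.toList.length + 1 := by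
  rw [CoprodI.Word.rcons]
  split
  · omega
  · simp [CoprodI.Word.cons]

theorem equivPair_tail_length (i : ι) (w : CoprodI.Word G) (h : w.fstIdx = some i) :
    (CoprodI.Word.equivPair i w).tail.toList.length + 1 = w.toList.length := by
  induction w using CoprodI.Word.consRecOn with
  | empty => simp [CoprodI.Word.fstIdx, CoprodI.Word.empty] at h
  | cons j m w' h1 h2 ih =>
    have hij : j = i := by
      rw [CoprodI.Word.fstIdx_cons] at h
      exact Option.some.inj h
    subst hij
    have ht : (CoprodI.Word.equivPair j (CoprodI.Word.cons m w' h1 h2)).tail = w' := by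
      rw [CoprodI.Word.cons_eq_smul, CoprodI.Word.equivPair_smul_same,
        CoprodI.Word.equivPair_eq_of_fstIdx_ne h1]
    rw [ht]
    simp [CoprodI.Word.cons]

theorem equiv_prod (w : CoprodI.Word G) :
    CoprodI.Word.equiv (CoprodI.Word.prod w) = w :=
  CoprodI.Word.equiv.apply_eq_iff_eq_symm_apply.mpr rfl

theorem prod_equiv (x : CoprodI G) :
    CoprodI.Word.prod (CoprodI.Word.equiv x) = x :=
  CoprodI.Word.equiv.symm_apply_apply x

theorem conj_aux [Nonempty ι] :
    ∀ (k : ℕ) (x : CoprodI G), ((CoprodI.Word.equiv x).toList).length ≤ k → IsOfFinOrder x →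
      ∃ (g : CoprodI G) (i : ι) (y : G i), x = g * CoprodI.of y * g⁻¹ := by
  intro k
  induction k with
  | zero =>
    intro x hlen _
    have hx1 : x = 1 := by
      have h0 : (CoprodI.Word.equiv x).toList = [] := List.length_eq_zero_iff.mp (by omega)
      have : CoprodI.Word.equiv x = CoprodI.Word.empty := CoprodI.Word.ext h0
      rw [← prod_equiv x, this, CoprodI.Word.prod_empty]
    exact ⟨1, Classical.arbitrary ι, 1, by simp [hx1]⟩
  | succ k ih =>
    intro x hlen hx
    have hxw : CoprodI.Word.prod (CoprodI.Word.equiv x) = x := prod_equiv x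
    rcases hlist : (CoprodI.Word.equiv x).toList with _ | ⟨a, l⟩
    · -- empty word : x = 1
      have : CoprodI.Word.equiv x = CoprodI.Word.empty := CoprodI.Word.ext hlist
      refine ⟨1, Classical.arbitrary ι, 1, ?_⟩
      rw [← hxw, this, CoprodI.Word.prod_empty]
      simp
    rcases l with _ | ⟨b, l'⟩
    · -- single letter
      refine ⟨1, a.1, a.2, ?_⟩
      rw [← hxw]
      simp [CoprodI.Word.prod, hlist]
    · -- length ≥ 2
      set w := CoprodI.Word.equiv x with hwdef
      have hwne : w.toList ≠ [] := by rw [hlist]; simp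
      have hhead : w.toList.head? = some a := by rw [hlist]; rfl
      set c := w.toList.getLast hwne with hcdef
      have hclast : w.toList.getLast? = some c := List.getLast?_eq_getLast _
      by_cases hac : a.1 = c.1
      · -- conjugate to shorter word
        have hfst : w.fstIdx = some a.1 := by
          rw [CoprodI.Word.fstIdx, hhead]; rfl
        set P := CoprodI.Word.equivPair a.1 w with hPdef
        have hrcons : CoprodI.Word.rcons P = w := by
          rw [hPdef, ← CoprodI.Word.equivPair_symm]
          exact (CoprodI.Word.equivPair a.1).symm_apply_apply w
        have hP1 : P.head ≠ 1 := by
          intro h1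
          have : w = P.tail := by rw [← hrcons, CoprodI.Word.rcons, dif_pos h1]
          exact P.fstIdx_ne (this ▸ hfst)
        have hsplit : w.toList = ⟨a.1, P.head⟩ :: P.tail.toList := by
          conv_lhs => rw [← hrcons]
          rw [CoprodI.Word.rcons, dif_neg hP1]
          rfl
        have htail_list : P.tail.toList = b :: l' := by
          rw [hlist] at hsplit
          exact (List.cons.injEq _ _ _ _ ▸ hsplit).2.symm ▸ rfl
        have hxdecomp : x = CoprodI.of P.head * CoprodI.Word.prod P.tail := by
          rw [← hxw, ← hrcons, CoprodI.Word.prod_rcons]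
        have htne : P.tail ≠ CoprodI.Word.empty := by
          intro h
          rw [h] at htail_list
          simp [CoprodI.Word.empty] at htail_list
        obtain ⟨i₂, j₂, u, hu⟩ := CoprodI.NeWord.of_word P.tail htne
        have hul : u.toList = P.tail.toList := congrArg CoprodI.Word.toList hu
        have hlast_t : P.tail.toList.getLast? = some c := by
          have h1 : w.toList.getLast? = P.tail.toList.getLast? := by
            rw [hsplit, htail_list, List.getLast?_cons_cons]
          rw [← h1, hclast]
        have hj₂ : j₂ = a.1 := by
          have h0 := u.toList_getLast?
          rw [hul, hlast_t] at h0
          have h2 : (⟨j₂, u.last⟩ : Σ i, G i) = c := (Option.some.inj h0).symm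
          rw [hac]
          exact congrArg Sigma.fst h2
        subst hj₂
        set v2 := u.inv with hv2def
        set W2 := v2.toWord with hW2def
        have hW2fst : W2.fstIdx = some a.1 := by
          rw [CoprodI.Word.fstIdx,
            show W2.toList.head? = some ⟨a.1, v2.head⟩ from v2.toList_head?]
          rfl
        have hW2prod : CoprodI.Word.prod W2 = (CoprodI.Word.prod P.tail)⁻¹ := by
          rw [show CoprodI.Word.prod W2 = v2.prod from rfl, hv2def,
            CoprodI.NeWord.inv_prod, CoprodI.NeWord.prod, hu]
        set z := CoprodI.of P.head⁻¹ * CoprodI.Word.prod W2 with hzdef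
        have hzinv : z⁻¹ = CoprodI.Word.prod P.tail * CoprodI.of P.head := by
          rw [hzdef, mul_inv_rev, hW2prod, inv_inv, map_inv, inv_inv]
        have hxz : x = CoprodI.of P.head * z⁻¹ * (CoprodI.of P.head)⁻¹ := by
          rw [hzinv, hxdecomp]
          group
        have hzconj : z = (CoprodI.of P.head)⁻¹ * x⁻¹ * ((CoprodI.of P.head)⁻¹)⁻¹ := by
          rw [hxz]
          group
        have hzfin : IsOfFinOrder z := by
          obtain ⟨m, hm0, hm⟩ := isOfFinOrder_iff_pow_eq_one.mp hx
          refine isOfFinOrder_iff_pow_eq_one.mpr ⟨m, hm0, ?_⟩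
          rw [hzconj, conj_pow, inv_pow, hm]
          group
        have hz_len : (CoprodI.Word.equiv z).toList.length ≤ k := by
          have hsm : z = CoprodI.Word.prod (CoprodI.of P.head⁻¹ • W2) := by
            rw [CoprodI.Word.prod_smul, hzdef]
          have heq : CoprodI.Word.equiv z = CoprodI.of P.head⁻¹ • W2 := by
            rw [hsm, equiv_prod]
          rw [heq, CoprodI.Word.of_smul_def]
          refine le_trans (rcons_length _) ?_
          change (CoprodI.Word.equivPair a.1 W2).tail.toList.length + 1 ≤ k
          have h2 := equivPair_tail_length a.1 W2 hW2fst
          have h3 : W2.toList.length = P.tail.toList.length := by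
            rw [show W2.toList = v2.toList from rfl, hv2def, neword_inv_length, hul]
          have h4 : w.toList.length = P.tail.toList.length + 1 := by
            rw [hsplit]; rfl
          simp only [h3] at h2
          omega
        obtain ⟨g, i0, y0, hy0⟩ := ih z hz_len hzfin
        refine ⟨CoprodI.of P.head * g, i0, y0⁻¹, ?_⟩
        rw [hxz, hy0, map_inv]
        group
      · -- contradiction: infinite order
        exfalso
        have hwne' : w ≠ CoprodI.Word.empty := by
          intro h; rw [h] at hwne; exact hwne rfl
        obtain ⟨i, j, v, hv⟩ := CoprodI.NeWord.of_word w hwne'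
        have hvl : v.toList = w.toList := congrArg CoprodI.Word.toList hv
        have hi : (⟨i, v.head⟩ : Σ i, G i) = a := by
          have := v.toList_head?
          rw [hvl, hhead] at this
          exact (Option.some.inj this).symm
        have hj : (⟨j, v.last⟩ : Σ i, G i) = c := by
          have := v.toList_getLast?
          rw [hvl, hclast] at this
          exact (Option.some.inj this).symm
        have hij : i ≠ j := by
          rw [show i = a.1 from congrArg Sigma.fst hi,
            show j = c.1 from congrArg Sigma.fst hj]
          exact hac
        have hvx : v.prod = x := by
          rw [CoprodI.NeWord.prod, hv, hxw]
        obtain ⟨m, hm0, hm⟩ := isOfFinOrder_iff_pow_eq_one.mp hx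
        obtain ⟨m', rfl⟩ : ∃ m', m = m' + 1 := ⟨m - 1, by omega⟩
        exact neword_pow_ne_one hij v m' (by rw [hvx]; exact hm)

theorem conj_of_isOfFinOrder [Nonempty ι] (x : CoprodI G) (hx : IsOfFinOrder x) :
    ∃ (g : CoprodI G) (i : ι) (y : G i), x = g * CoprodI.of y * g⁻¹ :=
  conj_aux _ x le_rfl hx

end TorsionAux


/-- There is a surjective homomorphism from the free product
`Z_{n_1} * ... * Z_{n_b}` onto `Z_n` with torsion-free kernel iff
`gcd(n/n_1, ..., n/n_b) = 1`. -/
theorem stmt1 (n b : ℕ) (hn : 2 ≤ n) (hb : 1 ≤ b) (ns : Fin b → ℕ)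
    (h2 : ∀ j, 2 ≤ ns j) (hdvd : ∀ j, ns j ∣ n) :
    (∃ Φ : Monoid.CoprodI (fun j : Fin b => Multiplicative (ZMod (ns j))) →*
        Multiplicative (ZMod n),
      Function.Surjective Φ ∧ ∀ x ∈ Φ.ker, IsOfFinOrder x → x = 1) ↔
    Finset.univ.gcd (fun j : Fin b => n / ns j) = 1 := by
  classical
  have hn0 : n ≠ 0 := by omega
  haveI : NeZero n := ⟨hn0⟩
  haveI : Nonempty (Fin b) := ⟨⟨0, hb⟩⟩
  haveI : ∀ j, NeZero (ns j) := fun j => ⟨by have := h2 j; omega⟩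
  constructor
  · rintro ⟨Φ, hsurj, htf⟩
    set d := Finset.univ.gcd (fun j : Fin b => n / ns j) with hd
    set ψ : ∀ j : Fin b, Multiplicative (ZMod (ns j)) →* Multiplicative (ZMod n) :=
      fun j => Φ.comp (Monoid.CoprodI.of (M := fun j : Fin b => Multiplicative (ZMod (ns j))) (i := j)) with hψ
    have hinj : ∀ j, Function.Injective (ψ j) := by
      intro j
      rw [injective_iff_map_eq_one]
      intro y hy
      have hker : Monoid.CoprodI.of (M := fun j : Fin b => Multiplicative (ZMod (ns j))) (i := j) y ∈ Φ.ker := hy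
      have hypow : y ^ ns j = 1 := by
        have h0 : (ns j) • (Multiplicative.toAdd y) = 0 := by
          rw [nsmul_eq_mul, ZMod.natCast_self, zero_mul]
        calc y ^ ns j = Multiplicative.ofAdd ((ns j) • Multiplicative.toAdd y) := by
              rw [ofAdd_nsmul, ofAdd_toAdd]
          _ = 1 := by rw [h0, ofAdd_zero]
      have hfin : IsOfFinOrder (Monoid.CoprodI.of (M := fun j : Fin b => Multiplicative (ZMod (ns j))) (i := j) y) := by
        refine isOfFinOrder_iff_pow_eq_one.mpr ⟨ns j, by have := h2 j; omega, ?_⟩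
        rw [← map_pow, hypow, map_one]
      have h1 := htf _ hker hfin
      have h1' : Monoid.CoprodI.of (M := fun j : Fin b => Multiplicative (ZMod (ns j))) (i := j) y
          = Monoid.CoprodI.of (M := fun j : Fin b => Multiplicative (ZMod (ns j))) (i := j)
            (1 : Multiplicative (ZMod (ns j))) := by
        rw [map_one]
        exact h1
      exact Monoid.CoprodI.of_injective j h1'
    have horder : ∀ j, (n / ns j) ∣
        (Multiplicative.toAdd (ψ j (Multiplicative.ofAdd (1 : ZMod (ns j))))).val := by
      intro j
      set e := Multiplicative.toAdd (ψ j (Multiplicative.ofAdd (1 : ZMod (ns j)))) with he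
      have h1 : orderOf (ψ j (Multiplicative.ofAdd (1 : ZMod (ns j)))) = ns j := by
        rw [orderOf_injective (ψ j) (hinj j), orderOf_ofAdd_eq_addOrderOf,
          ZMod.addOrderOf_one]
      have h2' : addOrderOf e = ns j := by
        rw [← h1, ← orderOf_ofAdd_eq_addOrderOf, he, ofAdd_toAdd]
      have h3 : addOrderOf ((e.val : ℕ) : ZMod n) = ns j := by
        rw [ZMod.natCast_rightInverse e]; exact h2'
      rw [ZMod.addOrderOf_coe e.val hn0] at h3
      have hgd : Nat.gcd n e.val ∣ n := Nat.gcd_dvd_left _ _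
      have hg : Nat.gcd n e.val = n / ns j := by
        have h4 := Nat.div_div_self hgd hn0
        rw [h3] at h4
        exact h4.symm
      rw [← hg]
      exact Nat.gcd_dvd_right _ _
    set H : Subgroup (Multiplicative (ZMod n)) :=
      Subgroup.zpowers (Multiplicative.ofAdd ((d : ℕ) : ZMod n)) with hH
    have hgen : ∀ j, ψ j (Multiplicative.ofAdd (1 : ZMod (ns j))) ∈ H := by
      intro j
      obtain ⟨m, hm⟩ := dvd_trans (Finset.gcd_dvd (f := fun j : Fin b => n / ns j) (Finset.mem_univ j)) (horder j)
      set e := Multiplicative.toAdd (ψ j (Multiplicative.ofAdd (1 : ZMod (ns j)))) with he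
      have h1 : ψ j (Multiplicative.ofAdd (1 : ZMod (ns j)))
          = (Multiplicative.ofAdd ((d : ℕ) : ZMod n)) ^ m := by
        have hdm : m • ((d : ℕ) : ZMod n) = ((d * m : ℕ) : ZMod n) := by
          rw [nsmul_eq_mul]
          push_cast
          ring
        rw [← ofAdd_nsmul, hdm, ← hm, ZMod.natCast_rightInverse e, he, ofAdd_toAdd]
      rw [h1]
      exact pow_mem (Subgroup.mem_zpowers _) m
    have hrange : ∀ j, (ψ j).range ≤ H := by
      rintro j _ ⟨z, rfl⟩
      have hz : z = (Multiplicative.ofAdd (1 : ZMod (ns j))) ^ (Multiplicative.toAdd z).val := by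
        rw [← ofAdd_nsmul, Nat.smul_one_eq_cast,
          ZMod.natCast_rightInverse (Multiplicative.toAdd z), ofAdd_toAdd]
      rw [hz, map_pow]
      exact pow_mem (hgen j) _
    have hone : Multiplicative.ofAdd (1 : ZMod n) ∈ H := by
      have hle : Φ.range ≤ H := by
        have hΦ : Φ = Monoid.CoprodI.lift ψ := (Monoid.CoprodI.lift_comp_of' Φ).symm
        rw [hΦ, Monoid.CoprodI.range_eq_iSup]
        exact iSup_le hrange
      obtain ⟨g, hg⟩ := hsurj (Multiplicative.ofAdd (1 : ZMod n))
      exact hle ⟨g, hg⟩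
    obtain ⟨kk, hkk⟩ := Subgroup.mem_zpowers_iff.mp hone
    have hunit : IsUnit ((d : ℕ) : ZMod n) := by
      have h1 : kk • ((d : ℕ) : ZMod n) = 1 := by
        have := congrArg Multiplicative.toAdd hkk
        rwa [← ofAdd_zsmul, toAdd_ofAdd, toAdd_ofAdd] at this
      rw [zsmul_eq_mul] at h1
      exact IsUnit.of_mul_eq_one _ (by rw [mul_comm] at h1; exact h1)
    have hcop : Nat.Coprime d n := (ZMod.isUnit_iff_coprime d n).mp hunit
    have hdn : d ∣ n := dvd_trans (Finset.gcd_dvd (f := fun j : Fin b => n / ns j) (Finset.mem_univ ⟨0, hb⟩))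
      (Nat.div_dvd_of_dvd (hdvd ⟨0, hb⟩))
    exact (Nat.gcd_eq_left hdn).symm.trans hcop
  · intro hgcd
    set a : Fin b → ZMod n := fun j => ((n / ns j : ℕ) : ZMod n) with ha
    have hfa : ∀ j, (zmultiplesHom (ZMod n) (a j)) ((ns j : ℕ) : ℤ) = 0 := by
      intro j
      rw [zmultiplesHom_apply, natCast_zsmul, ha]
      rw [nsmul_eq_mul]
      rw [← Nat.cast_mul, Nat.mul_div_cancel' (hdvd j), ZMod.natCast_self]
    set f' : ∀ j, ZMod (ns j) →+ ZMod n :=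
      fun j => ZMod.lift (ns j) ⟨zmultiplesHom (ZMod n) (a j), hfa j⟩ with hf'
    have hf'val : ∀ j (x : ZMod (ns j)), f' j x = (x.val : ℤ) • a j := by
      intro j x
      conv_lhs => rw [← ZMod.natCast_rightInverse x]
      rw [show ((x.val : ℕ) : ZMod (ns j)) = ((x.val : ℤ) : ZMod (ns j)) by push_cast; rfl]
      rw [hf', ZMod.lift_coe]
      rfl
    have hford : ∀ j, addOrderOf (a j) = ns j := by
      intro j
      rw [ha, ZMod.addOrderOf_coe _ hn0,
        Nat.gcd_eq_right (Nat.div_dvd_of_dvd (hdvd j)), Nat.div_div_self (hdvd j) hn0]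
    have hf'inj : ∀ j, Function.Injective (f' j) := by
      intro j
      rw [injective_iff_map_eq_zero]
      intro x hx
      rw [hf'val, natCast_zsmul] at hx
      have hdvd' : ns j ∣ x.val := by
        have h6 := addOrderOf_dvd_of_nsmul_eq_zero hx
        rwa [hford j] at h6
      have hlt : x.val < ns j := ZMod.val_lt x
      have h0 : x.val = 0 := Nat.eq_zero_of_dvd_of_lt hdvd' hlt
      have := ZMod.natCast_rightInverse x
      rw [h0] at this
      rw [← this, Nat.cast_zero]
    set f : ∀ j, Multiplicative (ZMod (ns j)) →* Multiplicative (ZMod n) :=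
      fun j => AddMonoidHom.toMultiplicative (f' j) with hfdef
    set Φ := Monoid.CoprodI.lift f with hΦ
    have hf_apply : ∀ j (y : Multiplicative (ZMod (ns j))),
        f j y = Multiplicative.ofAdd (f' j (Multiplicative.toAdd y)) := fun _ _ => rfl
    have hmem : ∀ j, Multiplicative.ofAdd (a j) ∈ Φ.range := by
      intro j
      refine ⟨Monoid.CoprodI.of (Multiplicative.ofAdd (1 : ZMod (ns j))), ?_⟩
      rw [hΦ, Monoid.CoprodI.lift_of, hf_apply, toAdd_ofAdd]
      congr 1
      rw [hf'val]
      haveI : Fact (1 < ns j) := ⟨h2 j⟩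
      rw [ZMod.val_one, Nat.cast_one, one_smul]
    refine ⟨Φ, ?_, ?_⟩
    · rw [← MonoidHom.range_eq_top]
      have hstep : ∀ s : Finset (Fin b),
          Multiplicative.ofAdd (((s.gcd fun j => n / ns j : ℕ) : ZMod n)) ∈ Φ.range := by
        intro s
        induction s using Finset.induction_on with
        | empty =>
          rw [Finset.gcd_empty, Nat.cast_zero, ofAdd_zero]
          exact one_mem _
        | @insert j s hj ih =>
          rw [Finset.gcd_insert]
          set p : ℕ := n / ns j with hp
          set q : ℕ := s.gcd fun j => n / ns j with hq
          have hbez := Nat.gcd_eq_gcd_ab p q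
          have hcast : ((Nat.gcd p q : ℕ) : ZMod n)
              = (Nat.gcdA p q) • ((p : ℕ) : ZMod n) + (Nat.gcdB p q) • ((q : ℕ) : ZMod n) := by
            have h5 := congrArg (fun z : ℤ => ((z : ℤ) : ZMod n)) hbez
            push_cast at h5
            rw [h5, zsmul_eq_mul, zsmul_eq_mul]
            ring
          rw [show (gcd p q : ℕ) = Nat.gcd p q from rfl, hcast, ofAdd_add, ofAdd_zsmul,
            ofAdd_zsmul]
          exact mul_mem (zpow_mem (hmem j) _) (zpow_mem ih _)
      have h1 := hstep Finset.univ
      rw [hgcd, Nat.cast_one] at h1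
      rw [eq_top_iff]
      intro x _
      have hx : x = (Multiplicative.ofAdd (1 : ZMod n)) ^ (Multiplicative.toAdd x).val := by
        rw [← ofAdd_nsmul, Nat.smul_one_eq_cast,
          ZMod.natCast_rightInverse (Multiplicative.toAdd x), ofAdd_toAdd]
      rw [hx]
      exact pow_mem h1 _
    · intro x hker hfin
      obtain ⟨g, j, y, rfl⟩ := TorsionAux.conj_of_isOfFinOrder (ι := Fin b) (G := fun j : Fin b => Multiplicative (ZMod (ns j))) x hfin
      have h1 : Φ (g * Monoid.CoprodI.of (M := fun j : Fin b => Multiplicative (ZMod (ns j))) (i := j) y * g⁻¹) = f j y := by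
        rw [map_mul, map_mul, map_inv, hΦ, Monoid.CoprodI.lift_of]
        rw [mul_comm ((Monoid.CoprodI.lift f) g), mul_assoc, mul_inv_cancel, mul_one]
      have h2' : f j y = 1 := by
        rw [← h1]
        exact hker
      have hy : y = 1 := by
        have hinj : Function.Injective (f j) := fun u v huv =>
          hf'inj j (a₁ := Multiplicative.toAdd u) (a₂ := Multiplicative.toAdd v)
            (congrArg Multiplicative.toAdd huv)
        exact hinj (by rw [h2', map_one])
      rw [hy]
      simp
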